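/- arXiv:1905.11647 — 2 statements merged into one kernel-verified Lean document; each statement's English description precedes it below -/
import Mathlib

section
/- Let J, H be bounded operators on a complex Hilbert space with J* = −J = J⁻¹ and H self-adjoint. Suppose λ ∈ iℝ \ {0} is an eigenvalue of J H with eigenvector f and that ⟨H f, f⟩ = 0. Then ⟨J⁻¹ f, f⟩ = 0, i.e. the Fredholm solvability condition for the generalized eigenvector equation J H g = λ g + f is satisfied. -/
/-- Fredholm solvability condition for the generalized eigenvector equation: if
`J* = -J = J⁻¹`, `H` self-adjoint, `λ ∈ iℝ \ {0}` is an eigenvalue of `J H` with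
eigenvector `f`, and the Krein quantity vanishes, `⟨H f, f⟩ = 0`, then
`⟨J⁻¹ f, f⟩ = 0`. -/
theorem fredholm_condition_for_jordan_block
    {E : Type*} [NormedAddCommGroup E] [InnerProductSpace ℂ E] [CompleteSpace E]
    (J H Jinv : E →L[ℂ] E)
    (hJskew : ContinuousLinearMap.adjoint J = -J)
    (hJinv₁ : Jinv.comp J = ContinuousLinearMap.id ℂ E)
    (hJinv₂ : J.comp Jinv = ContinuousLinearMap.id ℂ E)
    (hH : IsSelfAdjoint H)
    (f : E) (hf : f ≠ 0) (lam : ℂ) (hlam₀ : lam ≠ 0) (hlamIm : lam.re = 0)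
    (heig : J (H f) = lam • f)
    (hK : (inner ℂ (H f) f : ℂ) = 0) :
    (inner ℂ (Jinv f) f : ℂ) = 0 := by
  have h1 : H f = lam • Jinv f := by
    have h := congrArg Jinv heig
    have h2 : Jinv (J (H f)) = H f := by
      have := congrFun (congrArg DFunLike.coe hJinv₁) (H f)
      simpa using this
    rw [h2] at h
    simpa [map_smul] using h
  rw [h1, inner_smul_left] at hK
  have : (starRingEnd ℂ) lam ≠ 0 := by simpa using hlam₀
  exact (mul_eq_zero.mp hK).resolve_left this
end

section
/- Let f₀ : ℓ²(ℤ^d,ℝ) × ℝ → ℓ²(ℤ^d,ℝ) be the stationary dNLS map f₀(A,Ω) = ΩA + γ|A|^{2p}A − ΔA, and let f = f₀ + ε f₁ with f₁ a C¹ map bounded together with its derivative uniformly for small ε. If 𝒜 solves f₀(𝒜,Ω) = 0 and the Jacobian J_Ω = Ω + (1+2p)γ|𝒜|^{2p} − Δ is invertible on ℓ²(ℤ^d,ℝ), then there exist ε₁ > 0 and C > 0 such that for all 0 < ε < ε₁ there is a unique solution 𝔄(ε) of f(𝔄,Ω,ε) = 0 with ‖𝔄(ε) − 𝒜‖_{ℓ²}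 ≤ Cε, and the Jacobian of f at 𝔄(ε) differs from J_Ω in operator norm by at most Cε. -/
/-- The discrete Laplacian on `ℤ^d` (real values). -/
noncomputable def dLapR {d : ℕ} (u : (Fin d → ℤ) → ℝ) (n : Fin d → ℤ) : ℝ :=
  ∑ i : Fin d,
    (u (Function.update n i (n i + 1)) + u (Function.update n i (n i - 1)) - 2 * u n)

/-- Real `ℓ²(ℤ^d)`. -/
noncomputable abbrev L2ZdR (d : ℕ) := lp (fun _ : Fin d → ℤ => ℝ) 2

/-! ### Auxiliary scalar lemmas -/

open Finset in
lemma abs_pow_sub_pow_le' (a b S : ℝ) (n : ℕ) (ha : |a| ≤ S) (hb : |b| ≤ S) :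
    |a ^ n - b ^ n| ≤ n * S ^ (n - 1) * |a - b| := by
  have hS : 0 ≤ S := le_trans (abs_nonneg a) ha
  have key : a ^ n - b ^ n = (∑ i ∈ range n, a ^ i * b ^ (n - 1 - i)) * (a - b) :=
    (geom_sum₂_mul a b n).symm
  rw [key, abs_mul]
  have : |∑ i ∈ range n, a ^ i * b ^ (n - 1 - i)| ≤ n * S ^ (n - 1) := by
    calc |∑ i ∈ range n, a ^ i * b ^ (n - 1 - i)|
        ≤ ∑ i ∈ range n, |a ^ i * b ^ (n - 1 - i)| := Finset.abs_sum_le_sum_abs _ _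
      _ ≤ ∑ i ∈ range n, S ^ (n - 1) := by
          refine Finset.sum_le_sum fun i hi => ?_
          rw [abs_mul, abs_pow, abs_pow]
          have h1 : |a| ^ i ≤ S ^ i := pow_le_pow_left₀ (abs_nonneg a) ha i
          have h2 : |b| ^ (n - 1 - i) ≤ S ^ (n - 1 - i) :=
            pow_le_pow_left₀ (abs_nonneg b) hb _
          calc |a| ^ i * |b| ^ (n - 1 - i) ≤ S ^ i * S ^ (n - 1 - i) :=
                mul_le_mul h1 h2 (pow_nonneg (abs_nonneg b) _) (pow_nonneg hS i)
            _ = S ^ (n - 1) := by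
                rw [← pow_add]; congr 1
                have := Finset.mem_range.1 hi; omega
      _ = n * S ^ (n - 1) := by rw [Finset.sum_const, card_range, nsmul_eq_mul]
  exact mul_le_mul_of_nonneg_right this (abs_nonneg _)

open Finset in
lemma key_bracket (a u v S : ℝ) (m : ℕ) (h1 : |a + u| ≤ S) (h2 : |a + v| ≤ S)
    (h3 : |a| ≤ S) :
    |(a + u) ^ m - (a + v) ^ m - (m : ℝ) * a ^ (m - 1) * (u - v)| ≤
      (m : ℝ) * m * S ^ (m - 2) * (|u| + |v|) * |u - v| := by
  have hS : 0 ≤ S := le_trans (abs_nonneg a) h3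
  set x := a + u with hx
  set y := a + v with hy
  have factor : x ^ m - y ^ m = (∑ i ∈ range m, x ^ i * y ^ (m - 1 - i)) * (u - v) := by
    have : x - y = u - v := by ring
    rw [← this, geom_sum₂_mul]
  have lin : (m : ℝ) * a ^ (m - 1) = ∑ i ∈ range m, a ^ i * a ^ (m - 1 - i) := by
    rw [Finset.sum_congr rfl (fun i hi => ?_), Finset.sum_const, card_range, nsmul_eq_mul]
    rw [← pow_add]; congr 1
    have := Finset.mem_range.1 hi; omega
  have main : x ^ m - y ^ m - (m : ℝ) * a ^ (m - 1) * (u - v) =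
      (∑ i ∈ range m, (x ^ i * y ^ (m - 1 - i) - a ^ i * a ^ (m - 1 - i))) * (u - v) := by
    rw [Finset.sum_sub_distrib, factor, lin]; ring
  rw [main, abs_mul]
  refine mul_le_mul_of_nonneg_right ?_ (abs_nonneg _)
  calc |∑ i ∈ range m, (x ^ i * y ^ (m - 1 - i) - a ^ i * a ^ (m - 1 - i))|
      ≤ ∑ i ∈ range m, |x ^ i * y ^ (m - 1 - i) - a ^ i * a ^ (m - 1 - i)| :=
        Finset.abs_sum_le_sum_abs _ _
    _ ≤ ∑ _i ∈ range m, (m : ℝ) * S ^ (m - 2) * (|u| + |v|) := by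
        refine Finset.sum_le_sum fun i hi => ?_
        have him : i < m := Finset.mem_range.1 hi
        set j := m - 1 - i with hj
        have split : x ^ i * y ^ j - a ^ i * a ^ j =
            (x ^ i - a ^ i) * y ^ j + a ^ i * (y ^ j - a ^ j) := by ring
        rw [split]
        have t1 : |(x ^ i - a ^ i) * y ^ j| ≤ (i : ℝ) * S ^ (i - 1) * |u| * S ^ j := by
          rw [abs_mul]
          have b1 : |x ^ i - a ^ i| ≤ i * S ^ (i - 1) * |u| := by
            have := abs_pow_sub_pow_le' x a S i h1 h3
            simpa [hx, add_sub_cancel_left] using this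
          have b2 : |y ^ j| ≤ S ^ j := by
            rw [abs_pow]; exact pow_le_pow_left₀ (abs_nonneg y) h2 j
          exact mul_le_mul b1 b2 (abs_nonneg _) (by positivity)
        have t2 : |a ^ i * (y ^ j - a ^ j)| ≤ S ^ i * ((j : ℝ) * S ^ (j - 1) * |v|) := by
          rw [abs_mul]
          have b1 : |a ^ i| ≤ S ^ i := by
            rw [abs_pow]; exact pow_le_pow_left₀ (abs_nonneg a) h3 i
          have b2 : |y ^ j - a ^ j| ≤ j * S ^ (j - 1) * |v| := by
            have := abs_pow_sub_pow_le' y a S j h2 h3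
            simpa [hy, add_sub_cancel_left] using this
          exact mul_le_mul b1 b2 (abs_nonneg _) (pow_nonneg hS i)
        have e1 : (i : ℝ) * S ^ (i - 1) * |u| * S ^ j ≤ (m : ℝ) * S ^ (m - 2) * |u| := by
          rcases Nat.eq_zero_or_pos i with hi0 | hi0
          · simp [hi0]
            positivity
          · have hss : S ^ (i - 1) * S ^ j = S ^ (m - 2) := by
              rw [← pow_add]; congr 1; omega
            calc (i : ℝ) * S ^ (i - 1) * |u| * S ^ j
                = (i : ℝ) * (S ^ (i - 1) * S ^ j) * |u| := by ring
              _ = (i : ℝ) * S ^ (m - 2) * |u| := by rw [hss]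
              _ ≤ (m : ℝ) * S ^ (m - 2) * |u| := by
                  have him' : (i : ℝ) ≤ m := Nat.cast_le.2 him.le
                  exact mul_le_mul_of_nonneg_right
                    (mul_le_mul_of_nonneg_right him' (by positivity)) (abs_nonneg u)
        have e2 : S ^ i * ((j : ℝ) * S ^ (j - 1) * |v|) ≤ (m : ℝ) * S ^ (m - 2) * |v| := by
          rcases Nat.eq_zero_or_pos j with hj0 | hj0
          · simp [hj0]
            positivity
          · have hij : i + (j - 1) = m - 2 := by omega
            have hss : S ^ i * S ^ (j - 1) = S ^ (m - 2) := by rw [← pow_add, hij]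
            calc S ^ i * ((j : ℝ) * S ^ (j - 1) * |v|)
                = (j : ℝ) * (S ^ i * S ^ (j - 1)) * |v| := by ring
              _ = (j : ℝ) * S ^ (m - 2) * |v| := by rw [hss]
              _ ≤ (m : ℝ) * S ^ (m - 2) * |v| := by
                  have hjm : (j : ℝ) ≤ m := by
                    have : j ≤ m := by omega
                    exact_mod_cast this
                  exact mul_le_mul_of_nonneg_right
                    (mul_le_mul_of_nonneg_right hjm (by positivity)) (abs_nonneg v)
        calc |(x ^ i - a ^ i) * y ^ j + a ^ i * (y ^ j - a ^ j)|
            ≤ |(x ^ i - a ^ i) * y ^ j| + |a ^ i * (y ^ j - a ^ j)| := abs_add_le _ _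
          _ ≤ (m : ℝ) * S ^ (m - 2) * |u| + (m : ℝ) * S ^ (m - 2) * |v| :=
              add_le_add (t1.trans e1) (t2.trans e2)
          _ = (m : ℝ) * S ^ (m - 2) * (|u| + |v|) := by ring
    _ = (m : ℝ) * ((m : ℝ) * S ^ (m - 2) * (|u| + |v|)) := by
        rw [Finset.sum_const, card_range, nsmul_eq_mul]
    _ = (m : ℝ) * m * S ^ (m - 2) * (|u| + |v|) := by ring

lemma key_bracket' (x y a S : ℝ) (m : ℕ) (hx : |x| ≤ S) (hy : |y| ≤ S) (ha : |a| ≤ S) :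
    |x ^ m - y ^ m - (m : ℝ) * a ^ (m - 1) * (x - y)| ≤
      (m : ℝ) * m * S ^ (m - 2) * (|x - a| + |y - a|) * |x - y| := by
  have := key_bracket a (x - a) (y - a) S m (by simpa using hx) (by simpa using hy) ha
  simpa [sub_sub_sub_cancel_right] using this

/-! ### lp helpers -/

section lpHelpers
variable {ι : Type*}

lemma rpow_toReal_two (x : ℝ) : x ^ (2 : ENNReal).toReal = x ^ (2 : ℕ) := by
  have h : (2 : ENNReal).toReal = ((2 : ℕ) : ℝ) := by norm_num
  rw [h, Real.rpow_natCast]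

lemma sum_sq_le_norm_sq (h : lp (fun _ : ι => ℝ) 2) (s : Finset ι) :
    ∑ i ∈ s, |h i| ^ (2 : ℕ) ≤ ‖h‖ ^ (2 : ℕ) := by
  have := lp.sum_rpow_le_norm_rpow (p := 2) (by norm_num) h s
  simpa [rpow_toReal_two, Real.norm_eq_abs] using this

lemma memℓp_two_of_dominated {g : ι → ℝ} (h : lp (fun _ : ι => ℝ) 2) (c : ℝ)
    (hgh : ∀ n, |g n| ≤ c * |h n|) : Memℓp g 2 := by
  apply memℓp_gen' (C := c ^ (2 : ℕ) * ‖h‖ ^ (2 : ℕ))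
  intro s
  have step : ∀ i ∈ s, ‖g i‖ ^ (2 : ENNReal).toReal ≤ c ^ (2 : ℕ) * |h i| ^ (2 : ℕ) := by
    intro i _
    rw [rpow_toReal_two, Real.norm_eq_abs]
    calc |g i| ^ (2 : ℕ) ≤ (c * |h i|) ^ (2 : ℕ) :=
          pow_le_pow_left₀ (abs_nonneg _) (hgh i) 2
      _ = c ^ (2 : ℕ) * |h i| ^ (2 : ℕ) := by ring
  calc ∑ i ∈ s, ‖g i‖ ^ (2 : ENNReal).toReal ≤ ∑ i ∈ s, c ^ (2 : ℕ) * |h i| ^ (2 : ℕ) :=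
        Finset.sum_le_sum step
    _ = c ^ (2 : ℕ) * ∑ i ∈ s, |h i| ^ (2 : ℕ) := by rw [Finset.mul_sum]
    _ ≤ c ^ (2 : ℕ) * ‖h‖ ^ (2 : ℕ) :=
        mul_le_mul_of_nonneg_left (sum_sq_le_norm_sq h s) (by positivity)

lemma lp_norm_le_of_dominated (g h : lp (fun _ : ι => ℝ) 2) (c : ℝ) (hc : 0 ≤ c)
    (hgh : ∀ n, |g n| ≤ c * |h n|) : ‖g‖ ≤ c * ‖h‖ := by
  refine lp.norm_le_of_forall_sum_le (by norm_num) (by positivity) (fun s => ?_)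
  have step : ∀ i ∈ s, ‖g i‖ ^ (2 : ENNReal).toReal ≤ c ^ (2 : ℕ) * |h i| ^ (2 : ℕ) := by
    intro i _
    rw [rpow_toReal_two, Real.norm_eq_abs]
    calc |g i| ^ (2 : ℕ) ≤ (c * |h i|) ^ (2 : ℕ) :=
          pow_le_pow_left₀ (abs_nonneg _) (hgh i) 2
      _ = c ^ (2 : ℕ) * |h i| ^ (2 : ℕ) := by ring
  calc ∑ i ∈ s, ‖g i‖ ^ (2 : ENNReal).toReal ≤ ∑ i ∈ s, c ^ (2 : ℕ) * |h i| ^ (2 : ℕ) :=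
        Finset.sum_le_sum step
    _ = c ^ (2 : ℕ) * ∑ i ∈ s, |h i| ^ (2 : ℕ) := by rw [Finset.mul_sum]
    _ ≤ c ^ (2 : ℕ) * ‖h‖ ^ (2 : ℕ) :=
        mul_le_mul_of_nonneg_left (sum_sq_le_norm_sq h s) (by positivity)
    _ = (c * ‖h‖) ^ (2 : ℕ) := by ring
    _ = (c * ‖h‖) ^ (2 : ENNReal).toReal := (rpow_toReal_two _).symm

lemma lp_apply_abs_le_norm (f : lp (fun _ : ι => ℝ) 2) (n : ι) : |f n| ≤ ‖f‖ := by
  have := lp.norm_apply_le_norm (p := 2) (by norm_num) f n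
  simpa [Real.norm_eq_abs] using this

/-- Multiplication operator by a bounded sequence. -/
noncomputable def multCLM (w : ι → ℝ) (c : ℝ) (hc : 0 ≤ c) (hw : ∀ n, |w n| ≤ c) :
    lp (fun _ : ι => ℝ) 2 →L[ℝ] lp (fun _ : ι => ℝ) 2 :=
  LinearMap.mkContinuous
    { toFun := fun u => (⟨fun n => w n * u n,
        memℓp_two_of_dominated u c (fun n => by
          rw [abs_mul]
          exact mul_le_mul_of_nonneg_right (hw n) (abs_nonneg _))⟩ : lp (fun _ : ι => ℝ) 2)
      map_add' := fun u v => by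
        apply lp.ext; funext n
        simp only [lp.coeFn_add, Pi.add_apply]
        show w n * ((u + v : lp (fun _ : ι => ℝ) 2) n) = w n * u n + w n * v n
        rw [lp.coeFn_add]; simp [mul_add]
      map_smul' := fun r u => by
        apply lp.ext; funext n
        show w n * ((r • u : lp (fun _ : ι => ℝ) 2) n)
          = (r • (⟨fun n => w n * u n, _⟩ : lp (fun _ : ι => ℝ) 2)) n
        rw [lp.coeFn_smul, lp.coeFn_smul]
        simp [mul_comm, mul_left_comm] }
    c
    (fun u => by
      exact lp_norm_le_of_dominated _ u c hc (fun n => by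
        show |w n * u n| ≤ c * |u n|
        rw [abs_mul]
        exact mul_le_mul_of_nonneg_right (hw n) (abs_nonneg _)))

lemma multCLM_apply (w : ι → ℝ) (c : ℝ) (hc : 0 ≤ c) (hw : ∀ n, |w n| ≤ c)
    (u : lp (fun _ : ι => ℝ) 2) (n : ι) : (multCLM w c hc hw u) n = w n * u n := rfl

lemma multCLM_norm_le (w : ι → ℝ) (c : ℝ) (hc : 0 ≤ c) (hw : ∀ n, |w n| ≤ c) :
    ‖multCLM w c hc hw‖ ≤ c :=
  LinearMap.mkContinuous_norm_le _ hc _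

end lpHelpers

lemma dLapR_sub {d : ℕ} (u v : (Fin d → ℤ) → ℝ) (n : Fin d → ℤ) :
    dLapR (fun k => u k - v k) n = dLapR u n - dLapR v n := by
  simp only [dLapR]
  rw [← Finset.sum_sub_distrib]
  exact Finset.sum_congr rfl fun i _ => by ring

set_option maxHeartbeats 2000000
/-- Persistence of the dNLS soliton under the higher-order normal form perturbation:
if `𝒜` solves the stationary dNLS equation `f₀(𝒜,Ω) = Ω𝒜 + γ|𝒜|^{2p}𝒜 - Δ𝒜 = 0`
and the Jacobian `J_Ω = Ω + (1+2p)γ|𝒜|^{2p} - Δ` is invertible, then for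
`f = f₀ + ε f₁` with `f₁` C¹ and bounded together with its derivative uniformly for
small `ε`, there are `ε₁ > 0`, `C > 0` such that for `0 < ε < ε₁` there is a unique
solution `𝔄(ε)` of `f(𝔄,Ω,ε) = 0` with `‖𝔄(ε) - 𝒜‖ ≤ Cε`, and the Jacobian of `f`
at `𝔄(ε)` differs from `J_Ω` in operator norm by at most `Cε`. -/
theorem dnls_soliton_persistence_ift (d : ℕ) (hd : 1 ≤ d) (p : ℕ) (hp : 1 ≤ p)
    (γ Ω : ℝ) (hγ : 0 < γ)
    (f₀ : L2ZdR d → L2ZdR d)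
    (hf₀ : ∀ (A : L2ZdR d) (n : Fin d → ℤ),
      (f₀ A : ∀ _ : Fin d → ℤ, ℝ) n =
        Ω * (A : ∀ _ : Fin d → ℤ, ℝ) n +
        γ * |(A : ∀ _ : Fin d → ℤ, ℝ) n| ^ (2 * p) * (A : ∀ _ : Fin d → ℤ, ℝ) n -
        dLapR (fun k => (A : ∀ _ : Fin d → ℤ, ℝ) k) n)
    (f₁ : L2ZdR d → ℝ → L2ZdR d) (εbar M : ℝ) (hεbar : 0 < εbar) (hM : 0 < M)
    (hf₁diff : ∀ ε : ℝ, |ε| ≤ εbar → Differentiable ℝ (fun A => f₁ A ε))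
    (hf₁bdd : ∀ ε : ℝ, |ε| ≤ εbar → ∀ A : L2ZdR d,
      ‖f₁ A ε‖ ≤ M ∧ ‖fderiv ℝ (fun A' => f₁ A' ε) A‖ ≤ M)
    (𝒜 : L2ZdR d) (h𝒜 : f₀ 𝒜 = 0)
    (J Jinv : L2ZdR d →L[ℝ] L2ZdR d)
    (hJ : ∀ (u : L2ZdR d) (n : Fin d → ℤ),
      (J u : ∀ _ : Fin d → ℤ, ℝ) n =
        Ω * (u : ∀ _ : Fin d → ℤ, ℝ) n +
        ((1 + 2 * p : ℕ) : ℝ) * γ * |(𝒜 : ∀ _ : Fin d → ℤ, ℝ) n| ^ (2 * p) *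
          (u : ∀ _ : Fin d → ℤ, ℝ) n -
        dLapR (fun k => (u : ∀ _ : Fin d → ℤ, ℝ) k) n)
    (hJinv₁ : Jinv.comp J = ContinuousLinearMap.id ℝ (L2ZdR d))
    (hJinv₂ : J.comp Jinv = ContinuousLinearMap.id ℝ (L2ZdR d)) :
    ∃ ε₁ > 0, ∃ C > 0, ∀ ε : ℝ, 0 < ε → ε < ε₁ →
      (∃! 𝔄 : L2ZdR d, f₀ 𝔄 + ε • f₁ 𝔄 ε = 0 ∧ ‖𝔄 - 𝒜‖ ≤ C * ε) ∧
      (∀ 𝔄 : L2ZdR d, f₀ 𝔄 + ε • f₁ 𝔄 ε = 0 → ‖𝔄 - 𝒜‖ ≤ C * ε →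
        ‖fderiv ℝ (fun A => f₀ A + ε • f₁ A ε) 𝔄 - J‖ ≤ C * ε) := by
  classical
  -- notation
  set m : ℕ := 2 * p + 1 with hm
  have hm1 : m - 1 = 2 * p := by omega
  -- basic coercion facts
  have coe_sub : ∀ (F G : L2ZdR d) (n : Fin d → ℤ),
      ((F - G : L2ZdR d) : ∀ _ : Fin d → ℤ, ℝ) n = F n - G n := by
    intro F G n; rw [lp.coeFn_sub]; rfl
  have coe_add : ∀ (F G : L2ZdR d) (n : Fin d → ℤ),
      ((F + G : L2ZdR d) : ∀ _ : Fin d → ℤ, ℝ) n = F n + G n := by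
    intro F G n; rw [lp.coeFn_add]; rfl
  have lp_apply_sub_le : ∀ (F G : L2ZdR d) (n : Fin d → ℤ), |F n - G n| ≤ ‖F - G‖ := by
    intro F G n
    have := lp_apply_abs_le_norm (F - G) n
    rwa [coe_sub] at this
  -- the inverse relations
  have hJinvJ : ∀ u : L2ZdR d, Jinv (J u) = u := by
    intro u
    have := congrArg (fun T : L2ZdR d →L[ℝ] L2ZdR d => T u) hJinv₁
    simpa using this
  have hJJinv : ∀ u : L2ZdR d, J (Jinv u) = u := by
    intro u
    have := congrArg (fun T : L2ZdR d →L[ℝ] L2ZdR d => T u) hJinv₂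
    simpa using this
  -- the pointwise identity for the quadratic remainder
  have hpoint : ∀ (A B : L2ZdR d) (G : L2ZdR d →L[ℝ] L2ZdR d) (b : L2ZdR d),
      (∀ (u : L2ZdR d) (n : Fin d → ℤ),
        (G u : ∀ _ : Fin d → ℤ, ℝ) n =
          Ω * u n + (m : ℝ) * γ * (b n) ^ (2 * p) * u n
            - dLapR (fun k => u k) n) →
      ∀ n : Fin d → ℤ,
        ((f₀ A - f₀ B - G (A - B) : L2ZdR d) : ∀ _ : Fin d → ℤ, ℝ) n =
          γ * ((A n) ^ m - (B n) ^ m - (m : ℝ) * (b n) ^ (2 * p) * (A n - B n)) := by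
    intro A B G b hG n
    rw [coe_sub, coe_sub, hf₀, hf₀, hG]
    have hdl : dLapR (fun k => ((A - B : L2ZdR d) : ∀ _ : Fin d → ℤ, ℝ) k) n
        = dLapR (fun k => A k) n - dLapR (fun k => B k) n := by
      rw [show (fun k => ((A - B : L2ZdR d) : ∀ _ : Fin d → ℤ, ℝ) k)
            = fun k => A k - B k from funext fun k => coe_sub A B k]
      exact dLapR_sub _ _ n
    rw [coe_sub A B n, hdl]
    rw [Even.pow_abs (even_two_mul p), Even.pow_abs (even_two_mul p)]
    rw [hm]; push_cast; ring
  -- J satisfies the formula with b = 𝒜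
  have hJform : ∀ (u : L2ZdR d) (n : Fin d → ℤ),
      (J u : ∀ _ : Fin d → ℤ, ℝ) n =
        Ω * u n + (m : ℝ) * γ * (𝒜 n) ^ (2 * p) * u n - dLapR (fun k => u k) n := by
    intro u n
    rw [hJ, Even.pow_abs (even_two_mul p)]
    rw [hm]; push_cast; ring
  -- norm bound on the quadratic remainder
  have hRnorm : ∀ (A B : L2ZdR d) (G : L2ZdR d →L[ℝ] L2ZdR d) (b : L2ZdR d),
      (∀ (u : L2ZdR d) (n : Fin d → ℤ),
        (G u : ∀ _ : Fin d → ℤ, ℝ) n =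
          Ω * u n + (m : ℝ) * γ * (b n) ^ (2 * p) * u n
            - dLapR (fun k => u k) n) →
      ∀ r S : ℝ, ‖A - b‖ ≤ r → ‖B - b‖ ≤ r → ‖b‖ + r ≤ S →
      ‖f₀ A - f₀ B - G (A - B)‖ ≤
        γ * m * m * S ^ (m - 2) * (2 * r) * ‖A - B‖ := by
    intro A B G b hG r S hA hB hS
    have hr0 : 0 ≤ r := le_trans (norm_nonneg _) hA
    have hS0 : 0 ≤ S := le_trans (by positivity) hS
    refine lp_norm_le_of_dominated _ (A - B) _ (by positivity) (fun n => ?_)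
    rw [hpoint A B G b hG n]
    have hAn : |A n| ≤ S := by
      have h1 : |A n - b n| ≤ r := (lp_apply_sub_le A b n).trans hA
      have h2 : |b n| ≤ ‖b‖ := lp_apply_abs_le_norm b n
      calc |A n| = |b n + (A n - b n)| := by ring_nf
        _ ≤ |b n| + |A n - b n| := abs_add_le _ _
        _ ≤ ‖b‖ + r := add_le_add h2 h1
        _ ≤ S := hS
    have hBn : |B n| ≤ S := by
      have h1 : |B n - b n| ≤ r := (lp_apply_sub_le B b n).trans hB
      have h2 : |b n| ≤ ‖b‖ := lp_apply_abs_le_norm b n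
      calc |B n| = |b n + (B n - b n)| := by ring_nf
        _ ≤ |b n| + |B n - b n| := abs_add_le _ _
        _ ≤ ‖b‖ + r := add_le_add h2 h1
        _ ≤ S := hS
    have hbn : |b n| ≤ S := (lp_apply_abs_le_norm b n).trans (by linarith)
    have kb := key_bracket' (A n) (B n) (b n) S m hAn hBn hbn
    rw [hm1] at kb
    have habs : |γ * ((A n) ^ m - (B n) ^ m - (m : ℝ) * (b n) ^ (2 * p) * (A n - B n))|
        = γ * |(A n) ^ m - (B n) ^ m - (m : ℝ) * (b n) ^ (2 * p) * (A n - B n)| := by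
      rw [abs_mul, abs_of_pos hγ]
    rw [habs]
    have hsum : |A n - b n| + |B n - b n| ≤ 2 * r := by
      have h1 : |A n - b n| ≤ r := (lp_apply_sub_le A b n).trans hA
      have h2 : |B n - b n| ≤ r := (lp_apply_sub_le B b n).trans hB
      linarith
    have step : (m : ℝ) * m * S ^ (m - 2) * (|A n - b n| + |B n - b n|) * |A n - B n|
        ≤ (m : ℝ) * m * S ^ (m - 2) * (2 * r) * |A n - B n| := by
      have := mul_le_mul_of_nonneg_left hsum
        (show (0:ℝ) ≤ (m : ℝ) * m * S ^ (m - 2) by positivity)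
      exact mul_le_mul_of_nonneg_right (by nlinarith [abs_nonneg (A n - B n)]) (abs_nonneg _)
    calc γ * |(A n) ^ m - (B n) ^ m - (m : ℝ) * (b n) ^ (2 * p) * (A n - B n)|
        ≤ γ * ((m : ℝ) * m * S ^ (m - 2) * (|A n - b n| + |B n - b n|) * |A n - B n|) :=
          mul_le_mul_of_nonneg_left kb hγ.le
      _ ≤ γ * ((m : ℝ) * m * S ^ (m - 2) * (2 * r) * |A n - B n|) :=
          mul_le_mul_of_nonneg_left step hγ.le
      _ = γ * m * m * S ^ (m - 2) * (2 * r) * |A n - B n| := by ring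
      _ = γ * m * m * S ^ (m - 2) * (2 * r) * |(A - B : L2ZdR d) n| := by
          rw [coe_sub]
  -- constants
  haveI : Fact ((1 : ENNReal) ≤ 2) := ⟨one_le_two⟩
  obtain ⟨S₀, hS₀⟩ : ∃ x : ℝ, x = ‖𝒜‖ + 1 := ⟨_, rfl⟩
  obtain ⟨Kq, hKq⟩ : ∃ x : ℝ, x = γ * m * m * S₀ ^ (m - 2) := ⟨_, rfl⟩
  obtain ⟨K₁, hK₁⟩ : ∃ x : ℝ, x = γ * m * (2 * p) * S₀ ^ (2 * p - 1) := ⟨_, rfl⟩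
  obtain ⟨cJ, hcJ⟩ : ∃ x : ℝ, x = ‖Jinv‖ := ⟨_, rfl⟩
  have hS₀0 : 0 < S₀ := by rw [hS₀]; positivity
  have hKq0 : 0 ≤ Kq := by rw [hKq]; positivity
  have hK₁0 : 0 ≤ K₁ := by rw [hK₁]; positivity
  have hcJ0 : 0 ≤ cJ := by rw [hcJ]; exact norm_nonneg _
  have hcJM : 0 ≤ cJ * M := mul_nonneg hcJ0 hM.le
  have hKcJM : 0 ≤ K₁ * cJ * M := mul_nonneg (mul_nonneg hK₁0 hcJ0) hM.le
  obtain ⟨C, hC⟩ : ∃ x : ℝ, x = 2 * cJ * M + 2 * K₁ * cJ * M + Kq + K₁ + M + 1 := ⟨_, rfl⟩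
  have hC0 : 0 < C := by rw [hC]; positivity
  have hCge1 : cJ * M + 1 ≤ C := by rw [hC]; nlinarith [hM.le, hK₁0, hKq0]
  have hCgeM : M + 1 ≤ C := by rw [hC]; nlinarith [hK₁0, hKq0]
  have hCge2 : 2 * cJ * M ≤ C := by rw [hC]; nlinarith [hM.le, hK₁0, hKq0]
  have hCgeW : 2 * K₁ * cJ * M + M ≤ C := by rw [hC]; nlinarith [hM.le, hK₁0, hKq0]
  set ε₁ : ℝ := min εbar (min (1 / C) (min (1 / (2 * cJ * Kq * C ^ 2 + 1))
      (1 / (2 * (cJ * (2 * Kq * C + M)) + 1)))) with hε₁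
  have hε₁0 : 0 < ε₁ :=
    lt_min hεbar (lt_min (by positivity) (lt_min (by positivity) (by positivity)))
  refine ⟨ε₁, hε₁0, C, hC0, fun ε hε0 hεlt => ?_⟩
  -- the per-ε smallness facts
  have hεεbar : |ε| ≤ εbar := by
    rw [abs_of_pos hε0]
    exact le_of_lt (lt_of_lt_of_le hεlt (min_le_left _ _))
  have hεC : C * ε ≤ 1 := by
    have h1 : ε < 1 / C := lt_of_lt_of_le hεlt ((min_le_right _ _).trans (min_le_left _ _))
    rw [lt_div_iff₀ hC0] at h1
    nlinarith
  have hq : 2 * cJ * Kq * C ^ 2 * ε ≤ 1 := by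
    have h1 : ε < 1 / (2 * cJ * Kq * C ^ 2 + 1) := lt_of_lt_of_le hεlt
      ((min_le_right _ _).trans ((min_le_right _ _).trans (min_le_left _ _)))
    rw [lt_div_iff₀ (by positivity)] at h1
    nlinarith
  have h5 : cJ * (2 * Kq * C + M) * ε ≤ 1 / 2 := by
    have h1 : ε < 1 / (2 * (cJ * (2 * Kq * C + M)) + 1) := lt_of_lt_of_le hεlt
      ((min_le_right _ _).trans ((min_le_right _ _).trans (min_le_right _ _)))
    have hX : 0 ≤ cJ * (2 * Kq * C + M) := by positivity
    rw [lt_div_iff₀ (by positivity)] at h1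
    nlinarith
  have hr0 : 0 < C * ε := by positivity
  have hr1 : C * ε ≤ 1 := hεC
  -- f₁ is Lipschitz with constant M
  have hLip : ∀ A B : L2ZdR d, ‖f₁ A ε - f₁ B ε‖ ≤ M * ‖A - B‖ := by
    intro A B
    have := Convex.norm_image_sub_le_of_norm_fderiv_le (f := fun A' => f₁ A' ε)
      (s := Set.univ) (fun x _ => (hf₁diff ε hεεbar) x)
      (fun x _ => (hf₁bdd ε hεεbar x).2) convex_univ (Set.mem_univ B) (Set.mem_univ A)
    simpa using this
  -- the contraction map
  set T : L2ZdR d → L2ZdR d := fun A => A - Jinv (f₀ A + ε • f₁ A ε) with hT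
  have hTfix : ∀ A : L2ZdR d, T A = A ↔ f₀ A + ε • f₁ A ε = 0 := by
    intro A
    constructor
    · intro h
      have h2 : Jinv (f₀ A + ε • f₁ A ε) = 0 := sub_eq_self.mp h
      have h3 := congrArg J h2
      rwa [hJJinv, map_zero] at h3
    · intro h
      rw [hT]; simp [h]
  -- self-mapping of the ball
  have hTmaps : ∀ A : L2ZdR d, ‖A - 𝒜‖ ≤ C * ε → ‖T A - 𝒜‖ ≤ C * ε := by
    intro A hA
    have expand : f₀ A + ε • f₁ A ε
        = (f₀ A - f₀ 𝒜 - J (A - 𝒜)) + J (A - 𝒜) + ε • f₁ A ε := by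
      rw [h𝒜]; abel
    have key : T A - 𝒜 = -(Jinv ((f₀ A - f₀ 𝒜 - J (A - 𝒜)) + ε • f₁ A ε)) := by
      rw [hT]
      show A - Jinv (f₀ A + ε • f₁ A ε) - 𝒜 = _
      rw [expand, map_add, map_add, hJinvJ, map_add]
      abel
    have hRb : ‖f₀ A - f₀ 𝒜 - J (A - 𝒜)‖ ≤ Kq * (2 * (C * ε)) * ‖A - 𝒜‖ := by
      have := hRnorm A 𝒜 J 𝒜 hJform (C * ε) S₀ hA (by simpa using hr0.le)
        (by rw [hS₀]; linarith)
      rwa [hKq]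
    have hf₁b : ‖f₁ A ε‖ ≤ M := (hf₁bdd ε hεεbar A).1
    have hJinvle : ∀ u : L2ZdR d, ‖Jinv u‖ ≤ cJ * ‖u‖ := by
      intro u; rw [hcJ]; exact Jinv.le_opNorm u
    calc ‖T A - 𝒜‖ = ‖Jinv ((f₀ A - f₀ 𝒜 - J (A - 𝒜)) + ε • f₁ A ε)‖ := by
          rw [key, norm_neg]
      _ ≤ cJ * ‖(f₀ A - f₀ 𝒜 - J (A - 𝒜)) + ε • f₁ A ε‖ := hJinvle _
      _ ≤ cJ * (Kq * (2 * (C * ε)) * ‖A - 𝒜‖ + ε * M) := by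
          refine mul_le_mul_of_nonneg_left ?_ hcJ0
          refine (norm_add_le _ _).trans (add_le_add hRb ?_)
          rw [norm_smul, Real.norm_eq_abs, abs_of_pos hε0]
          exact mul_le_mul_of_nonneg_left hf₁b hε0.le
      _ ≤ cJ * (Kq * (2 * (C * ε)) * (C * ε) + ε * M) := by
          refine mul_le_mul_of_nonneg_left (add_le_add_left ?_ _) hcJ0
          exact mul_le_mul_of_nonneg_left hA (by positivity)
      _ ≤ C * ε := by
          have e2 : (2 * cJ * Kq * C ^ 2 * ε) * ε ≤ 1 * ε :=
            mul_le_mul_of_nonneg_right hq hε0.le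
          have e3 : (cJ * M + 1) * ε ≤ C * ε := mul_le_mul_of_nonneg_right hCge1 hε0.le
          nlinarith
  -- contraction estimate
  have hTdiff : ∀ A B : L2ZdR d,
      T A - T B = -(Jinv ((f₀ A - f₀ B - J (A - B)) + ε • (f₁ A ε - f₁ B ε))) := by
    intro A B
    have expand : f₀ A + ε • f₁ A ε - (f₀ B + ε • f₁ B ε)
        = (f₀ A - f₀ B - J (A - B)) + J (A - B) + ε • (f₁ A ε - f₁ B ε) := by
      rw [smul_sub]; abel
    have step : T A - T B = (A - B) - Jinv (f₀ A + ε • f₁ A ε - (f₀ B + ε • f₁ B ε)) := by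
      rw [map_sub, hT]
      show A - Jinv (f₀ A + ε • f₁ A ε) - (B - Jinv (f₀ B + ε • f₁ B ε)) = _
      abel
    rw [step, expand, map_add, map_add, hJinvJ, map_add]
    abel
  have hTcontr : ∀ A B : L2ZdR d, ‖A - 𝒜‖ ≤ C * ε → ‖B - 𝒜‖ ≤ C * ε →
      ‖T A - T B‖ ≤ (1 / 2) * ‖A - B‖ := by
    intro A B hA hB
    have hRb : ‖f₀ A - f₀ B - J (A - B)‖ ≤ Kq * (2 * (C * ε)) * ‖A - B‖ := by
      have := hRnorm A B J 𝒜 hJform (C * ε) S₀ hA hB (by rw [hS₀]; linarith)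
      rwa [hKq]
    have hJinvle : ∀ u : L2ZdR d, ‖Jinv u‖ ≤ cJ * ‖u‖ := by
      intro u; rw [hcJ]; exact Jinv.le_opNorm u
    calc ‖T A - T B‖
        = ‖Jinv ((f₀ A - f₀ B - J (A - B)) + ε • (f₁ A ε - f₁ B ε))‖ := by
          rw [hTdiff A B, norm_neg]
      _ ≤ cJ * ‖(f₀ A - f₀ B - J (A - B)) + ε • (f₁ A ε - f₁ B ε)‖ := hJinvle _
      _ ≤ cJ * (Kq * (2 * (C * ε)) * ‖A - B‖ + ε * (M * ‖A - B‖)) := by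
          refine mul_le_mul_of_nonneg_left ?_ hcJ0
          refine (norm_add_le _ _).trans (add_le_add hRb ?_)
          rw [norm_smul, Real.norm_eq_abs, abs_of_pos hε0]
          exact mul_le_mul_of_nonneg_left (hLip A B) hε0.le
      _ = (cJ * (2 * Kq * C + M) * ε) * ‖A - B‖ := by ring
      _ ≤ (1 / 2) * ‖A - B‖ := mul_le_mul_of_nonneg_right h5 (norm_nonneg _)
  -- existence of the fixed point via the Banach fixed point theorem
  have hs_closed : IsComplete (Metric.closedBall 𝒜 (C * ε)) :=
    Metric.isClosed_closedBall.isComplete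
  have hmem : ∀ A : L2ZdR d, A ∈ Metric.closedBall 𝒜 (C * ε) ↔ ‖A - 𝒜‖ ≤ C * ε := by
    intro A; rw [Metric.mem_closedBall, dist_eq_norm]
  have hsf : Set.MapsTo T (Metric.closedBall 𝒜 (C * ε)) (Metric.closedBall 𝒜 (C * ε)) :=
    fun A hA => (hmem _).2 (hTmaps A ((hmem _).1 hA))
  have hcontr : ContractingWith (1 / 2 : NNReal)
      (hsf.restrict T (Metric.closedBall 𝒜 (C * ε)) (Metric.closedBall 𝒜 (C * ε))) := by
    constructor
    · have h12 : ((1/2 : NNReal) : ℝ) < ((1 : NNReal) : ℝ) := by push_cast; norm_num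
      exact_mod_cast h12
    · refine LipschitzWith.of_dist_le_mul fun x y => ?_
      have hxy := hTcontr x.1 y.1 ((hmem _).1 x.2) ((hmem _).1 y.2)
      rw [Subtype.dist_eq]
      simp only [Set.MapsTo.val_restrict_apply]
      rw [dist_eq_norm]
      have hd2 : dist x y = ‖x.1 - y.1‖ := by rw [Subtype.dist_eq, dist_eq_norm]
      rw [hd2]
      calc ‖T x.1 - T y.1‖ ≤ (1 / 2) * ‖x.1 - y.1‖ := hxy
        _ = ((1 / 2 : NNReal) : ℝ) * ‖x.1 - y.1‖ := by norm_num
  have h𝒜s : 𝒜 ∈ Metric.closedBall 𝒜 (C * ε) := Metric.mem_closedBall_self hr0.le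
  obtain ⟨y, hy_mem, hy_fix, -, -⟩ :=
    ContractingWith.exists_fixedPoint' hs_closed hsf hcontr h𝒜s (edist_ne_top _ _)
  have hy0 : f₀ y + ε • f₁ y ε = 0 := (hTfix y).1 hy_fix
  have hy_ball : ‖y - 𝒜‖ ≤ C * ε := (hmem y).1 hy_mem
  have huniq : ∀ A : L2ZdR d, f₀ A + ε • f₁ A ε = 0 ∧ ‖A - 𝒜‖ ≤ C * ε → A = y := by
    rintro A ⟨hA0, hAb⟩
    have hfixA : T A = A := (hTfix A).2 hA0
    have hfixy : T y = y := hy_fix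
    have h1 := hTcontr A y hAb hy_ball
    rw [hfixA, hfixy] at h1
    have h2 : ‖A - y‖ ≤ 0 := by linarith
    exact sub_eq_zero.mp (norm_le_zero_iff.mp h2)
  -- the fixed point is in the smaller ball of radius 2 cJ M ε
  have hy_close : ‖y - 𝒜‖ ≤ 2 * cJ * M * ε := by
    have hT𝒜 : ‖T 𝒜 - 𝒜‖ ≤ cJ * M * ε := by
      have e1 : T 𝒜 - 𝒜 = -(Jinv (ε • f₁ 𝒜 ε)) := by
        rw [hT]
        show 𝒜 - Jinv (f₀ 𝒜 + ε • f₁ 𝒜 ε) - 𝒜 = _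
        rw [h𝒜, zero_add]; abel
      have hJinvle : ‖Jinv (ε • f₁ 𝒜 ε)‖ ≤ cJ * ‖ε • f₁ 𝒜 ε‖ := by
        rw [hcJ]; exact Jinv.le_opNorm _
      calc ‖T 𝒜 - 𝒜‖ = ‖Jinv (ε • f₁ 𝒜 ε)‖ := by rw [e1, norm_neg]
        _ ≤ cJ * ‖ε • f₁ 𝒜 ε‖ := hJinvle
        _ ≤ cJ * (ε * M) := by
            refine mul_le_mul_of_nonneg_left ?_ hcJ0
            rw [norm_smul, Real.norm_eq_abs, abs_of_pos hε0]
            exact mul_le_mul_of_nonneg_left ((hf₁bdd ε hεεbar 𝒜).1) hε0.le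
        _ = cJ * M * ε := by ring
    have h1 : ‖y - 𝒜‖ ≤ ‖T y - T 𝒜‖ + ‖T 𝒜 - 𝒜‖ := by
      have : y - 𝒜 = (T y - T 𝒜) + (T 𝒜 - 𝒜) := by rw [hy_fix]; abel
      rw [this]; exact norm_add_le _ _
    have h2 := hTcontr y 𝒜 hy_ball (by simpa using hr0.le)
    have h3 : ‖y - 𝒜‖ ≤ (1 / 2) * ‖y - 𝒜‖ + cJ * M * ε := by
      calc ‖y - 𝒜‖ ≤ ‖T y - T 𝒜‖ + ‖T 𝒜 - 𝒜‖ := h1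
        _ ≤ (1 / 2) * ‖y - 𝒜‖ + cJ * M * ε := add_le_add h2 hT𝒜
    linarith
  refine ⟨⟨y, ⟨hy0, hy_ball⟩, huniq⟩, ?_⟩
  -- the Jacobian bound
  intro 𝔄 h𝔄0 h𝔄ball
  have h𝔄y : 𝔄 = y := huniq 𝔄 ⟨h𝔄0, h𝔄ball⟩
  subst h𝔄y
  have h𝔄close : ‖𝔄 - 𝒜‖ ≤ 2 * cJ * M * ε := hy_close
  have hsmall : 2 * cJ * M * ε ≤ C * ε := mul_le_mul_of_nonneg_right hCge2 hε0.le
  -- the multiplication operator W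
  have hwbound : ∀ n : Fin d → ℤ,
      |(m : ℝ) * γ * ((𝔄 n) ^ (2 * p) - (𝒜 n) ^ (2 * p))| ≤ K₁ * (2 * cJ * M * ε) := by
    intro n
    have h1 : |𝔄 n - 𝒜 n| ≤ 2 * cJ * M * ε := (lp_apply_sub_le 𝔄 𝒜 n).trans h𝔄close
    have h𝒜n : |𝒜 n| ≤ S₀ := (lp_apply_abs_le_norm 𝒜 n).trans (by rw [hS₀]; linarith)
    have h𝔄n : |𝔄 n| ≤ S₀ := by
      calc |𝔄 n| = |𝒜 n + (𝔄 n - 𝒜 n)| := by ring_nf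
        _ ≤ |𝒜 n| + |𝔄 n - 𝒜 n| := abs_add_le _ _
        _ ≤ ‖𝒜‖ + 2 * cJ * M * ε := add_le_add (lp_apply_abs_le_norm 𝒜 n) h1
        _ ≤ S₀ := by rw [hS₀]; linarith
    have hpw := abs_pow_sub_pow_le' (𝔄 n) (𝒜 n) S₀ (2 * p) h𝔄n h𝒜n
    have hm0 : (0:ℝ) ≤ (m : ℝ) * γ := by positivity
    calc |(m : ℝ) * γ * ((𝔄 n) ^ (2 * p) - (𝒜 n) ^ (2 * p))|
        = (m : ℝ) * γ * |(𝔄 n) ^ (2 * p) - (𝒜 n) ^ (2 * p)| := by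
          rw [abs_mul, abs_of_nonneg hm0]
      _ ≤ (m : ℝ) * γ * ((2 * p : ℕ) * S₀ ^ (2 * p - 1) * |𝔄 n - 𝒜 n|) :=
          mul_le_mul_of_nonneg_left hpw hm0
      _ ≤ (m : ℝ) * γ * ((2 * p : ℕ) * S₀ ^ (2 * p - 1) * (2 * cJ * M * ε)) := by
          refine mul_le_mul_of_nonneg_left ?_ hm0
          refine mul_le_mul_of_nonneg_left h1 ?_
          have : (0:ℝ) ≤ S₀ := hS₀0.le
          positivity
      _ = K₁ * (2 * cJ * M * ε) := by rw [hK₁]; push_cast; ring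
  obtain ⟨W, hWapp, hWnorm⟩ : ∃ W : L2ZdR d →L[ℝ] L2ZdR d,
      (∀ (u : L2ZdR d) (n : Fin d → ℤ),
        (W u : ∀ _ : Fin d → ℤ, ℝ) n = (m : ℝ) * γ * ((𝔄 n) ^ (2 * p) - (𝒜 n) ^ (2 * p)) * u n)
        ∧ ‖W‖ ≤ K₁ * (2 * cJ * M * ε) :=
    ⟨multCLM _ (K₁ * (2 * cJ * M * ε)) (by positivity) hwbound, fun u n => rfl,
      multCLM_norm_le _ _ _ _⟩
  have hJWform : ∀ (u : L2ZdR d) (n : Fin d → ℤ),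
      ((J + W) u : ∀ _ : Fin d → ℤ, ℝ) n =
        Ω * u n + (m : ℝ) * γ * (𝔄 n) ^ (2 * p) * u n - dLapR (fun k => u k) n := by
    intro u n
    have h1 : (J + W) u = J u + W u := rfl
    rw [h1, coe_add, hJform, hWapp]; ring
  -- Fréchet derivative of f₀ at 𝔄
  have hderiv : HasFDerivAt f₀ (J + W) 𝔄 := by
    rw [hasFDerivAt_iff_isLittleO_nhds_zero, Asymptotics.isLittleO_iff]
    intro c hc
    obtain ⟨Q, hQ⟩ : ∃ x : ℝ, x = γ * m * m * (‖𝔄‖ + 1) ^ (m - 2) * 2 := ⟨_, rfl⟩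
    have hQ0 : (0:ℝ) ≤ Q := by rw [hQ]; positivity
    have hδ : 0 < min 1 (c / (Q + 1)) := lt_min one_pos (by positivity)
    filter_upwards [Metric.ball_mem_nhds 0 hδ] with h hh
    rw [Metric.mem_ball, dist_zero_right] at hh
    have hh1 : ‖h‖ ≤ 1 := le_of_lt (lt_of_lt_of_le hh (min_le_left _ _))
    have hhc : ‖h‖ ≤ c / (Q + 1) := le_of_lt (lt_of_lt_of_le hh (min_le_right _ _))
    have hAB : (𝔄 + h) - 𝔄 = h := by abel
    have main := hRnorm (𝔄 + h) 𝔄 (J + W) 𝔄 hJWform ‖h‖ (‖𝔄‖ + 1)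
      (by rw [hAB]) (by simpa using (norm_nonneg h)) (by linarith)
    rw [hAB] at main
    calc ‖f₀ (𝔄 + h) - f₀ 𝔄 - (J + W) h‖
        ≤ γ * m * m * (‖𝔄‖ + 1) ^ (m - 2) * (2 * ‖h‖) * ‖h‖ := main
      _ = (Q * ‖h‖) * ‖h‖ := by rw [hQ]; ring
      _ ≤ c * ‖h‖ := by
          refine mul_le_mul_of_nonneg_right ?_ (norm_nonneg h)
          have hQc : Q * ‖h‖ ≤ Q * (c / (Q + 1)) := mul_le_mul_of_nonneg_left hhc hQ0
          have hfr : Q * (c / (Q + 1)) ≤ c := by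
            rw [mul_div_assoc', div_le_iff₀ (by positivity)]
            nlinarith [hc.le]
          linarith
  -- derivative of the perturbed map
  have hf₁d : HasFDerivAt (fun A' => f₁ A' ε) (fderiv ℝ (fun A' => f₁ A' ε) 𝔄) 𝔄 :=
    ((hf₁diff ε hεεbar) 𝔄).hasFDerivAt
  have hfull : HasFDerivAt (fun A => f₀ A + ε • f₁ A ε)
      ((J + W) + ε • fderiv ℝ (fun A' => f₁ A' ε) 𝔄) 𝔄 :=
    hderiv.add (hf₁d.const_smul ε)
  rw [hfull.fderiv]
  have hsub : (J + W) + ε • fderiv ℝ (fun A' => f₁ A' ε) 𝔄 - J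
      = W + ε • fderiv ℝ (fun A' => f₁ A' ε) 𝔄 := by abel
  rw [hsub]
  have hF₁ : ‖fderiv ℝ (fun A' => f₁ A' ε) 𝔄‖ ≤ M := (hf₁bdd ε hεεbar 𝔄).2
  calc ‖W + ε • fderiv ℝ (fun A' => f₁ A' ε) 𝔄‖
      ≤ ‖W‖ + ‖ε • fderiv ℝ (fun A' => f₁ A' ε) 𝔄‖ := norm_add_le _ _
    _ ≤ K₁ * (2 * cJ * M * ε) + ε * M := by
        refine add_le_add hWnorm ?_
        rw [norm_smul, Real.norm_eq_abs, abs_of_pos hε0]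
        exact mul_le_mul_of_nonneg_left hF₁ hε0.le
    _ = (2 * K₁ * cJ * M + M) * ε := by ring
    _ ≤ C * ε := mul_le_mul_of_nonneg_right hCgeW hε0.le
end
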